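/- Let G be a group, N a normal subgroup of G, and k, c integers with 1 ≤ k < c such that the k-fold iterated commutator subgroup [N,_kG] is trivial (the pair (G,N) is nilpotent of class at most k). Let N* be a group on which G acts by automorphisms, and let φ : N* → G be a group homomorphism with range N and satisfying φ(g • e) = g·φ(e)·g⁻¹ for all g ∈ G and e ∈ N*. For a subgroup X of N*, let [X,G] denote the subgroup of N* generated by {x⁻¹·(g • x) : x ∈ X, g ∈ G}, and let [X,_iG] denote its i-fold iterate. If ker φ ≤ [N*,_cG] and [ker φ,_cG] is trivial, then ker φ is trivial. (Hence a pair (G,N) nilpotent of class at most k with nontrivial c-nilpotent multiplier has no c-covering pair for c > k.) -/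

import Mathlib

/-- `itComm X Y k` is the `k`-fold iterated commutator subgroup
`[X,_k Y] = ⁅…⁅⁅X,Y⁆,Y⁆,…,Y⁆` (with `k` copies of `Y`); `itComm X Y 0 = X`. -/
def itComm {P : Type*} [Group P] (X Y : Subgroup P) : ℕ → Subgroup P
  | 0 => X
  | k + 1 => ⁅itComm X Y k, Y⁆

/-- For a group `G` acting by automorphisms on a group `H` and a subgroup `X` of `H`,
`relComm G X = [X, G]` is the subgroup of `H` generated by the `G`-commutators
`x⁻¹ * (g • x)` with `x ∈ X`, `g ∈ G`. -/
def relComm (G : Type*) {H : Type*} [Group G] [Group H] [MulDistribMulAction G H]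
    (X : Subgroup H) : Subgroup H :=
  Subgroup.closure {y | ∃ x ∈ X, ∃ g : G, y = x⁻¹ * (g • x)}

/-- `relCommIter G X i = [X,_i G]`, the `i`-fold iterate of `relComm`. -/
def relCommIter (G : Type*) {H : Type*} [Group G] [Group H] [MulDistribMulAction G H]
    (X : Subgroup H) : ℕ → Subgroup H
  | 0 => X
  | i + 1 => relComm G (relCommIter G X i)

section Helpers

variable {G H : Type*} [Group G] [Group H] [MulDistribMulAction G H]

lemma relComm_mono {X Y : Subgroup H} (h : X ≤ Y) : relComm G X ≤ relComm G Y :=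
  Subgroup.closure_mono (fun _ ⟨x, hx, g, hy⟩ => ⟨x, h hx, g, hy⟩)

lemma relCommIter_mono {X Y : Subgroup H} (h : X ≤ Y) :
    ∀ i, relCommIter G X i ≤ relCommIter G Y i
  | 0 => h
  | i + 1 => relComm_mono (relCommIter_mono h i)

lemma relCommIter_add (X : Subgroup H) (a b : ℕ) :
    relCommIter G X (a + b) = relCommIter G (relCommIter G X a) b := by
  induction b with
  | zero => rfl
  | succ b ih =>
      show relComm G (relCommIter G X (a + b)) = _
      rw [ih]; rfl

lemma smul_mem_relComm {X : Subgroup H} (hX : ∀ (g : G), ∀ x ∈ X, g • x ∈ X)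
    (g : G) {y : H} (hy : y ∈ relComm G X) : g • y ∈ relComm G X := by
  induction hy using Subgroup.closure_induction with
  | mem z hz =>
      obtain ⟨x, hx, h, rfl⟩ := hz
      apply Subgroup.subset_closure
      refine ⟨g • x, hX g x hx, g * h * g⁻¹, ?_⟩
      simp [smul_mul', smul_inv', smul_smul, mul_assoc]
  | one => simpa using (relComm G X).one_mem
  | mul a b _ _ ha hb => rw [smul_mul']; exact mul_mem ha hb
  | inv a _ ha => rw [smul_inv']; exact inv_mem ha

lemma relComm_le_self {X : Subgroup H} (hX : ∀ (g : G), ∀ x ∈ X, g • x ∈ X) :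
    relComm G X ≤ X := by
  rw [relComm, Subgroup.closure_le]
  rintro y ⟨x, hx, g, rfl⟩
  exact mul_mem (inv_mem hx) (hX g x hx)

lemma smul_mem_relCommIter {X : Subgroup H} (hX : ∀ (g : G), ∀ x ∈ X, g • x ∈ X) :
    ∀ i (g : G), ∀ x ∈ relCommIter G X i, g • x ∈ relCommIter G X i
  | 0 => hX
  | i + 1 => fun g x hx => smul_mem_relComm (smul_mem_relCommIter hX i) g hx

lemma relCommIter_antitone {X : Subgroup H} (hX : ∀ (g : G), ∀ x ∈ X, g • x ∈ X)
    {i j : ℕ} (hij : i ≤ j) : relCommIter G X j ≤ relCommIter G X i := by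
  induction j with
  | zero => simpa [Nat.le_zero.1 hij] using le_rfl
  | succ j ih =>
      rcases Nat.lt_or_ge i (j+1) with h | h
      · exact le_trans (relComm_le_self (smul_mem_relCommIter hX j)) (ih (Nat.lt_succ_iff.1 h))
      · have : i = j + 1 := le_antisymm hij h
        subst this; exact le_rfl

end Helpers

section MapLemma

open scoped commutatorElement in
lemma map_relComm_le {G H : Type*} [Group G] [Group H] [MulDistribMulAction G H]
    (φ : H →* G) (hequiv : ∀ (g : G) (e : H), φ (g • e) = g * φ e * g⁻¹)
    (X : Subgroup H) : (relComm G X).map φ ≤ ⁅X.map φ, (⊤ : Subgroup G)⁆ := by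
  rw [relComm, MonoidHom.map_closure, Subgroup.closure_le]
  rintro y ⟨z, ⟨x, hx, g, rfl⟩, rfl⟩
  have : φ (x⁻¹ * (g • x)) = ⁅(φ x)⁻¹, g⁆ := by
    simp [hequiv, commutatorElement_def, mul_assoc]
  rw [this]
  exact Subgroup.commutator_mem_commutator (inv_mem ⟨x, hx, rfl⟩) (Subgroup.mem_top g)

end MapLemma

/-- Let `G` be a group, `N` a normal subgroup of `G`, and `k, c` integers with `1 ≤ k < c` such
that `[N,_k G]` is trivial.  Let `N*` be a group on which `G` acts by automorphisms and let
`φ : N* → G` be a homomorphism with range `N` satisfying `φ(g • e) = g φ(e) g⁻¹`.  If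
`ker φ ≤ [N*,_c G]` and `[ker φ,_c G]` is trivial, then `ker φ` is trivial. -/
theorem ker_trivial_of_relative_central {G : Type*} [Group G] (N : Subgroup G) [N.Normal]
    (k c : ℕ) (hk : 1 ≤ k) (hkc : k < c) (hnil : itComm N ⊤ k = ⊥)
    {Nstar : Type*} [Group Nstar] [MulDistribMulAction G Nstar]
    (φ : Nstar →* G) (hrange : φ.range = N)
    (hequiv : ∀ (g : G) (e : Nstar), φ (g • e) = g * φ e * g⁻¹)
    (hker : φ.ker ≤ relCommIter G (⊤ : Subgroup Nstar) c)
    (hZ : relCommIter G φ.ker c = ⊥) :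
    φ.ker = ⊥ := by
  set K := φ.ker with hK
  have hKinv : ∀ (g : G), ∀ x ∈ K, g • x ∈ K := by
    intro g x hx
    have : φ x = 1 := hx
    simp [hK, MonoidHom.mem_ker, hequiv, this]
  -- φ maps relCommIter ⊤ i into itComm N ⊤ i
  have hmap : ∀ i, (relCommIter G (⊤ : Subgroup Nstar) i).map φ ≤ itComm N ⊤ i := by
    intro i
    induction i with
    | zero =>
        show Subgroup.map φ ⊤ ≤ N
        rw [← MonoidHom.range_eq_map, hrange]
    | succ i ih =>
        calc (relComm G (relCommIter G (⊤ : Subgroup Nstar) i)).map φ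
            ≤ ⁅(relCommIter G (⊤ : Subgroup Nstar) i).map φ, (⊤ : Subgroup G)⁆ :=
              map_relComm_le φ hequiv _
          _ ≤ ⁅itComm N ⊤ i, (⊤ : Subgroup G)⁆ := Subgroup.commutator_mono ih le_rfl
  -- relCommIter ⊤ k ≤ K
  have hk' : relCommIter G (⊤ : Subgroup Nstar) k ≤ K := by
    intro x hx
    have : φ x ∈ itComm N ⊤ k := hmap k ⟨x, hx, rfl⟩
    rw [hnil] at this
    exact this
  set d := c - k with hd
  have hd1 : 1 ≤ d := Nat.le_sub_of_add_le (by omega)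
  have hcd : c = k + d := by omega
  -- K ≤ relCommIter K d
  have hKd : K ≤ relCommIter G K d := by
    calc K ≤ relCommIter G (⊤ : Subgroup Nstar) c := hker
      _ = relCommIter G (relCommIter G (⊤ : Subgroup Nstar) k) d := by rw [hcd, relCommIter_add]
      _ ≤ relCommIter G K d := relCommIter_mono hk' d
  -- iterate
  have hpow : ∀ n : ℕ, K ≤ relCommIter G K (n * d) := by
    intro n
    induction n with
    | zero => simp [relCommIter]
    | succ n ih =>
        have : relCommIter G K d ≤ relCommIter G (relCommIter G K (n * d)) d :=
          relCommIter_mono ih d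
        rw [← relCommIter_add] at this
        calc K ≤ relCommIter G K d := hKd
          _ ≤ relCommIter G K (n * d + d) := this
          _ = relCommIter G K ((n + 1) * d) := by rw [Nat.succ_mul]
  have hcle : c ≤ c * d := Nat.le_mul_of_pos_right c (by omega)
  have : K ≤ relCommIter G K c := le_trans (hpow c) (relCommIter_antitone hKinv hcle)
  rw [hZ] at this
  exact le_bot_iff.1 this
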